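/- arXiv:1501.02143 — 2 statements merged into one kernel-verified Lean document; each statement's English description precedes it below -/
import Mathlib

section
/- Let l_1,l_2,l_3,u_1,u_2,u_3,u_4 ∈ (0,1] and let t* ∈ [0, ε·min(l_1,l_2,l_3,u_1,...,u_4)] for some ε ∈ (0, 1/2] satisfy (l_1+t*)(l_2+t*)(l_3+t*)·t* = (u_1−t*)(u_2−t*)(u_3−t*)(u_4−t*). Define t̃ = u_1 u_2 u_3 u_4 / (l_1 l_2 l_3). Then (1 − 6.5ε)·t̃ ≤ t* ≤ t̃. -/
set_option maxHeartbeats 1000000 in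
private lemma maxent_aux_A2 (a b c t : ℝ) (ha : 0 < a) (hb : 0 < b) (hc : 0 < c)
    (ht : 0 ≤ t) :
    (a * b * c - t * (a * b + a * c + b * c)) * ((a + t) * (b + t) * (c + t))
      ≤ (a * b * c) * (a * b * c) := by
  have h_a : (0:ℝ) ≤ t^2 * ((a*b + a*c + b*c)^2 - (a*b*c)*(a+b+c)) := by
    apply mul_nonneg (sq_nonneg t)
    nlinarith [sq_nonneg (a*b - a*c), sq_nonneg (a*b - b*c), sq_nonneg (a*c - b*c)]
  have h_b : (0:ℝ) ≤ t^3 * ((a+b+c)*(a*b + a*c + b*c) - a*b*c) := by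
    apply mul_nonneg (by positivity)
    nlinarith [mul_pos (mul_pos ha hb) hc,
      mul_nonneg (mul_nonneg (sq_nonneg a) hb.le) hc.le,
      mul_nonneg (mul_nonneg ha.le (sq_nonneg b)) hc.le,
      mul_nonneg (mul_nonneg ha.le hb.le) (sq_nonneg c)]
  have h_c : (0:ℝ) ≤ t^4 * (a*b + a*c + b*c) := by positivity
  nlinarith [h_a, h_b, h_c]

set_option maxHeartbeats 1000000 in
private lemma maxent_aux_B1 (a b c t ε : ℝ) (ht : 0 ≤ t)
    (ha : t ≤ ε * a) (hb : t ≤ ε * b) (hc : t ≤ ε * c) (hε : 0 < ε) :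
    ε^2 * (t * (a * b + a * c + b * c)) ≤ t^3 + 2 * ε^3 * (a * b * c) := by
  nlinarith [mul_nonneg (mul_nonneg (sub_nonneg.2 ha) (sub_nonneg.2 hb)) (sub_nonneg.2 hc),
    mul_nonneg (mul_nonneg (sub_nonneg.2 ha) (sub_nonneg.2 hb)) ht,
    mul_nonneg (mul_nonneg (sub_nonneg.2 hb) (sub_nonneg.2 hc)) ht,
    mul_nonneg (mul_nonneg (sub_nonneg.2 ha) (sub_nonneg.2 hc)) ht,
    mul_nonneg (mul_nonneg ht ht) ht]

private lemma maxent_aux_num1 (ε : ℝ) (hε : 0 < ε) (h : ε < 2/13) :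
    2 * ε * (1 + ε)^3 < (1 - ε)^4 := by
  nlinarith [pow_pos hε 2, pow_pos hε 3, pow_pos hε 4]

private lemma maxent_aux_num2 (ε : ℝ) (hε : 0 < ε) :
    1 - 13/2 * ε ≤ (1 - 5/2 * ε) * (1 - 4 * ε) := by nlinarith

private lemma maxent_aux_quart (ε : ℝ) (hε : 0 < ε) (hε' : ε ≤ 1/2) :
    1 - 4 * ε ≤ (1 - ε)^4 := by nlinarith [sq_nonneg ε, sq_nonneg (1 - ε)]

set_option maxHeartbeats 1000000 in
/-- If `t*` solves the maximum-entropy balance equation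
`(l₁+t)(l₂+t)(l₃+t)·t = (u₁−t)(u₂−t)(u₃−t)(u₄−t)` and
`0 ≤ t* ≤ ε·min(l₁,l₂,l₃,u₁,…,u₄)` for some `ε ∈ (0,1/2]`, then with
`t̃ = u₁u₂u₃u₄/(l₁l₂l₃)` we have `(1 − 6.5ε)·t̃ ≤ t* ≤ t̃`. -/
theorem maxent_triple_estimate (l₁ l₂ l₃ u₁ u₂ u₃ u₄ ε t : ℝ)
    (hl₁ : 0 < l₁) (hl₁' : l₁ ≤ 1) (hl₂ : 0 < l₂) (hl₂' : l₂ ≤ 1)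
    (hl₃ : 0 < l₃) (hl₃' : l₃ ≤ 1)
    (hu₁ : 0 < u₁) (hu₁' : u₁ ≤ 1) (hu₂ : 0 < u₂) (hu₂' : u₂ ≤ 1)
    (hu₃ : 0 < u₃) (hu₃' : u₃ ≤ 1) (hu₄ : 0 < u₄) (hu₄' : u₄ ≤ 1)
    (hε : 0 < ε) (hε' : ε ≤ 1 / 2)
    (ht : 0 ≤ t)
    (ht' : t ≤ ε * min l₁ (min l₂ (min l₃ (min u₁ (min u₂ (min u₃ u₄))))))
    (hbal : (l₁ + t) * (l₂ + t) * (l₃ + t) * t = (u₁ - t) * (u₂ - t) * (u₃ - t) * (u₄ - t)) :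
    (1 - (13 / 2) * ε) * (u₁ * u₂ * u₃ * u₄ / (l₁ * l₂ * l₃)) ≤ t ∧
      t ≤ u₁ * u₂ * u₃ * u₄ / (l₁ * l₂ * l₃) := by
  have hP : 0 < l₁ * l₂ * l₃ := by positivity
  have hU : 0 < u₁ * u₂ * u₃ * u₄ := by positivity
  have b₁ : t ≤ ε * l₁ := ht'.trans (mul_le_mul_of_nonneg_left (min_le_left _ _) hε.le)
  have b₂ : t ≤ ε * l₂ := ht'.trans (mul_le_mul_of_nonneg_left
    ((min_le_right _ _).trans (min_le_left _ _)) hε.le)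
  have b₃ : t ≤ ε * l₃ := ht'.trans (mul_le_mul_of_nonneg_left
    ((min_le_right _ _).trans ((min_le_right _ _).trans (min_le_left _ _))) hε.le)
  have c₁ : t ≤ ε * u₁ := ht'.trans (mul_le_mul_of_nonneg_left
    ((min_le_right _ _).trans ((min_le_right _ _).trans ((min_le_right _ _).trans
      (min_le_left _ _)))) hε.le)
  have c₂ : t ≤ ε * u₂ := ht'.trans (mul_le_mul_of_nonneg_left
    ((min_le_right _ _).trans ((min_le_right _ _).trans ((min_le_right _ _).trans
      ((min_le_right _ _).trans (min_le_left _ _))))) hε.le)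
  have c₃ : t ≤ ε * u₃ := ht'.trans (mul_le_mul_of_nonneg_left
    ((min_le_right _ _).trans ((min_le_right _ _).trans ((min_le_right _ _).trans
      ((min_le_right _ _).trans ((min_le_right _ _).trans (min_le_left _ _)))))) hε.le)
  have c₄ : t ≤ ε * u₄ := ht'.trans (mul_le_mul_of_nonneg_left
    ((min_le_right _ _).trans ((min_le_right _ _).trans ((min_le_right _ _).trans
      ((min_le_right _ _).trans ((min_le_right _ _).trans (min_le_right _ _)))))) hε.le)
  -- (1-ε)uᵢ ≤ uᵢ - t, and nonnegativity
  have q₁ : (1-ε)*u₁ ≤ u₁ - t := by linarith [c₁]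
  have q₂ : (1-ε)*u₂ ≤ u₂ - t := by linarith [c₂]
  have q₃ : (1-ε)*u₃ ≤ u₃ - t := by linarith [c₃]
  have q₄ : (1-ε)*u₄ ≤ u₄ - t := by linarith [c₄]
  have n₁ : (0:ℝ) ≤ (1-ε)*u₁ := mul_nonneg (by linarith) hu₁.le
  have n₂ : (0:ℝ) ≤ (1-ε)*u₂ := mul_nonneg (by linarith) hu₂.le
  have n₃ : (0:ℝ) ≤ (1-ε)*u₃ := mul_nonneg (by linarith) hu₃.le
  have n₄ : (0:ℝ) ≤ (1-ε)*u₄ := mul_nonneg (by linarith) hu₄.le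
  have A0 : (1-ε)*u₁ * ((1-ε)*u₂) * ((1-ε)*u₃) * ((1-ε)*u₄)
      ≤ (u₁ - t) * (u₂ - t) * (u₃ - t) * (u₄ - t) :=
    mul_le_mul (mul_le_mul (mul_le_mul q₁ q₂ n₂ (by linarith)) q₃ n₃
      (mul_nonneg (by linarith) (by linarith))) q₄ n₄
      (mul_nonneg (mul_nonneg (by linarith) (by linarith)) (by linarith))
  have hA0eq : (1-ε)*u₁ * ((1-ε)*u₂) * ((1-ε)*u₃) * ((1-ε)*u₄)
      = (1-ε)^4 * (u₁*u₂*u₃*u₄) := by ring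
  have A1 : (1 - 4 * ε) * (u₁ * u₂ * u₃ * u₄)
      ≤ (u₁ - t) * (u₂ - t) * (u₃ - t) * (u₄ - t) := by
    have h := mul_le_mul_of_nonneg_right (maxent_aux_quart ε hε hε') hU.le
    rw [hA0eq] at A0; linarith
  have hRHSnn : (0:ℝ) ≤ (u₁ - t) * (u₂ - t) * (u₃ - t) * (u₄ - t) := by
    rw [hA0eq] at A0
    have : (0:ℝ) ≤ (1-ε)^4 * (u₁*u₂*u₃*u₄) := by positivity
    linarith
  -- upper bound : t * P ≤ U
  have hup : t * (l₁ * l₂ * l₃) ≤ u₁ * u₂ * u₃ * u₄ := by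
    have hprod : l₁ * l₂ * l₃ ≤ (l₁ + t) * (l₂ + t) * (l₃ + t) := by
      gcongr <;> linarith
    have h1 : t * (l₁ * l₂ * l₃) ≤ (l₁ + t) * (l₂ + t) * (l₃ + t) * t :=
      by linarith [mul_le_mul_of_nonneg_right hprod ht]
    have h2 : (u₁ - t) * (u₂ - t) * (u₃ - t) * (u₄ - t) ≤ u₁ * u₂ * u₃ * u₄ := by
      gcongr <;> linarith
    linarith [hbal ▸ h1]
  refine ⟨?_, by rw [le_div_iff₀ hP]; exact hup⟩
  rcases le_or_gt (2 / 13 : ℝ) ε with hcase | hcase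
  · have h1 : 1 - (13 / 2) * ε ≤ 0 := by linarith
    have h2 : (0:ℝ) ≤ u₁ * u₂ * u₃ * u₄ / (l₁ * l₂ * l₃) := by positivity
    exact (mul_nonpos_of_nonpos_of_nonneg h1 h2).trans ht
  rw [show (1 - (13 / 2) * ε) * (u₁ * u₂ * u₃ * u₄ / (l₁ * l₂ * l₃))
      = ((1 - (13 / 2) * ε) * (u₁ * u₂ * u₃ * u₄)) / (l₁ * l₂ * l₃) by ring,
    div_le_iff₀ hP]
  rcases le_or_gt (t * (l₁ * l₂ + l₁ * l₃ + l₂ * l₃)) ((5 / 2) * ε * (l₁ * l₂ * l₃))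
    with hA | hB
  · -- Case A
    have A2 := maxent_aux_A2 l₁ l₂ l₃ t hl₁ hl₂ hl₃ ht
    have hA3pos : (0:ℝ) < 1 - 5 / 2 * ε := by linarith
    have A3 : (1 - 5 / 2 * ε) * (l₁ * l₂ * l₃)
        ≤ l₁ * l₂ * l₃ - t * (l₁ * l₂ + l₁ * l₃ + l₂ * l₃) := by linarith [hA]
    have hsub : (0:ℝ) ≤ l₁ * l₂ * l₃ - t * (l₁ * l₂ + l₁ * l₃ + l₂ * l₃) :=
      le_trans (le_of_lt (mul_pos hA3pos hP)) A3
    have h4 : (l₁ * l₂ * l₃ - t * (l₁ * l₂ + l₁ * l₃ + l₂ * l₃))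
          * ((u₁ - t) * (u₂ - t) * (u₃ - t) * (u₄ - t))
        = (l₁ * l₂ * l₃ - t * (l₁ * l₂ + l₁ * l₃ + l₂ * l₃))
          * ((l₁ + t) * (l₂ + t) * (l₃ + t)) * t := by rw [← hbal]; ring
    have h5 : ((1 - 5/2 * ε) * (l₁ * l₂ * l₃)) * ((1 - 4 * ε) * (u₁ * u₂ * u₃ * u₄))
        ≤ (l₁ * l₂ * l₃ - t * (l₁ * l₂ + l₁ * l₃ + l₂ * l₃))
          * ((u₁ - t) * (u₂ - t) * (u₃ - t) * (u₄ - t)) :=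
      mul_le_mul A3 A1 (mul_nonneg (by linarith) hU.le) hsub
    have h6 : (l₁ * l₂ * l₃ - t * (l₁ * l₂ + l₁ * l₃ + l₂ * l₃))
          * ((l₁ + t) * (l₂ + t) * (l₃ + t)) * t
        ≤ (l₁ * l₂ * l₃) * (l₁ * l₂ * l₃) * t := mul_le_mul_of_nonneg_right A2 ht
    have hkey : ((1 - 5/2 * ε) * (1 - 4 * ε)) * ((u₁ * u₂ * u₃ * u₄) * (l₁ * l₂ * l₃))
        ≤ (l₁ * l₂ * l₃) * (l₁ * l₂ * l₃) * t := by
      rw [h4] at h5; linarith [h5, h6]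
    have hnum := mul_le_mul_of_nonneg_right (maxent_aux_num2 ε hε)
      (le_of_lt (mul_pos hU hP))
    have hfin : ((1 - 13/2 * ε) * (u₁ * u₂ * u₃ * u₄)) * (l₁ * l₂ * l₃)
        ≤ (t * (l₁ * l₂ * l₃)) * (l₁ * l₂ * l₃) := by linarith [hnum, hkey]
    exact le_of_mul_le_mul_right hfin hP
  · -- Case B : contradiction with ε < 2/13
    exfalso
    have hε2 : (0:ℝ) < ε^2 := by positivity
    have hε3 : (0:ℝ) < ε^3 := by positivity
    have B1 : ε^3 * (l₁ * l₂ * l₃) ≤ 2 * t^3 := by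
      have hm := maxent_aux_B1 l₁ l₂ l₃ t ε ht b₁ b₂ b₃ hε
      have hB' : ε^2 * ((5 / 2) * ε * (l₁ * l₂ * l₃)) < ε^2 * (t * (l₁ * l₂ + l₁ * l₃ + l₂ * l₃)) :=
        (mul_lt_mul_iff_right₀ hε2).mpr hB
      linarith [hm, hB']
    have B2 : t^4 ≤ ε^4 * (u₁ * u₂ * u₃ * u₄) := by
      have h := mul_le_mul (mul_le_mul (mul_le_mul c₁ c₂ ht (by positivity)) c₃ ht
        (by positivity)) c₄ ht (by positivity)
      linarith [h]
    have B4 : t * (l₁ * l₂ * l₃) ≤ 2 * ε * (u₁ * u₂ * u₃ * u₄) := by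
      have h := mul_le_mul_of_nonneg_right B1 ht
      have h2 : ε^3 * (t * (l₁ * l₂ * l₃)) ≤ ε^3 * (2 * ε * (u₁ * u₂ * u₃ * u₄)) := by
        linarith [h, B2]
      exact le_of_mul_le_mul_left (by linarith [h2]) hε3
    have B3 : (1 - ε)^4 * (u₁ * u₂ * u₃ * u₄) ≤ t * (l₁ * l₂ * l₃) * (1 + ε)^3 := by
      have p₁ : l₁ + t ≤ (1+ε)*l₁ := by linarith [b₁]
      have p₂ : l₂ + t ≤ (1+ε)*l₂ := by linarith [b₂]
      have p₃ : l₃ + t ≤ (1+ε)*l₃ := by linarith [b₃]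
      have hpr : (l₁ + t) * (l₂ + t) * (l₃ + t) ≤ (1+ε)*l₁ * ((1+ε)*l₂) * ((1+ε)*l₃) :=
        mul_le_mul (mul_le_mul p₁ p₂ (by linarith) (by positivity)) p₃ (by linarith)
          (mul_nonneg (by positivity) (by positivity))
      have h1 := mul_le_mul_of_nonneg_right hpr ht
      rw [hA0eq] at A0
      have : (1 - ε)^4 * (u₁ * u₂ * u₃ * u₄) ≤ (l₁ + t) * (l₂ + t) * (l₃ + t) * t := by
        rw [hbal]; exact A0
      linarith [h1, this]
    have hq : (1 - ε)^4 * (u₁ * u₂ * u₃ * u₄)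
        ≤ 2 * ε * (1 + ε)^3 * (u₁ * u₂ * u₃ * u₄) := by
      have h := mul_le_mul_of_nonneg_right B4 (by positivity : (0:ℝ) ≤ (1+ε)^3)
      linarith [B3, h]
    have hlt := mul_lt_mul_of_pos_right (maxent_aux_num1 ε hε hcase) hU
    linarith [hq, hlt]
end

section
/- If a distribution p on {0,1}^3 has all eight atoms positive and satisfies the balance equation Pr(XYW̄)·Pr(XȲW)·Pr(X̄YW)·Pr(X̄ȲW̄) = Pr(XȲW̄)·Pr(X̄YW̄)·Pr(X̄ȲW)·Pr(XYW), then p is the unique maximizer of entropy among all distributions on {0,1}^3 with the same singleton and pairwise marginals and all atoms positive. -/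
/-- Shannon entropy of a distribution on `{0,1}³`. -/
noncomputable def entropy3 (p : Bool → Bool → Bool → ℝ) : ℝ :=
  -∑ x : Bool, ∑ y : Bool, ∑ w : Bool, p x y w * Real.log (p x y w)

/-- Gibbs pointwise inequality (weak form). -/
lemma gibbs_le (a b : ℝ) (ha : 0 < a) (hb : 0 < b) :
    b - a ≤ b * Real.log b - b * Real.log a := by
  have h := Real.log_le_sub_one_of_pos (div_pos ha hb)
  rw [Real.log_div ha.ne' hb.ne'] at h
  have h2 := mul_le_mul_of_nonneg_left h hb.le
  have h3 : b * (a / b - 1) = a - b := by field_simp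
  nlinarith [h2, h3]

/-- Gibbs pointwise inequality (strict form). -/
lemma gibbs_lt (a b : ℝ) (ha : 0 < a) (hb : 0 < b) (hab : a ≠ b) :
    b - a < b * Real.log b - b * Real.log a := by
  have hne : a / b ≠ 1 := by
    intro h
    exact hab (by field_simp at h; linarith)
  have h := Real.log_lt_sub_one_of_pos (div_pos ha hb) hne
  rw [Real.log_div ha.ne' hb.ne'] at h
  have h2 := mul_lt_mul_of_pos_left h hb
  have h3 : b * (a / b - 1) = a - b := by field_simp
  nlinarith [h2, h3]

/-- If a distribution on `{0,1}³` has all eight atoms positive and satisfies the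
balance equation
`Pr(XYW̄)·Pr(XȲW)·Pr(X̄YW)·Pr(X̄ȲW̄) = Pr(XȲW̄)·Pr(X̄YW̄)·Pr(X̄ȲW)·Pr(XYW)`,
then it is the unique entropy maximizer among all positive distributions with the
same singleton and pairwise marginals. -/
theorem balance_implies_unique_maxent (p : Bool → Bool → Bool → ℝ)
    (hpos : ∀ x y w, 0 < p x y w)
    (hsum : ∑ x : Bool, ∑ y : Bool, ∑ w : Bool, p x y w = 1)
    (hbal : p true true false * p true false true * p false true true * p false false false =
      p true false false * p false true false * p false false true * p true true true) :
    ∀ q : Bool → Bool → Bool → ℝ,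
      (∀ x y w, 0 < q x y w) →
      (∑ x : Bool, ∑ y : Bool, ∑ w : Bool, q x y w = 1) →
      (∑ y : Bool, ∑ w : Bool, q true y w) = (∑ y : Bool, ∑ w : Bool, p true y w) →
      (∑ x : Bool, ∑ w : Bool, q x true w) = (∑ x : Bool, ∑ w : Bool, p x true w) →
      (∑ x : Bool, ∑ y : Bool, q x y true) = (∑ x : Bool, ∑ y : Bool, p x y true) →
      (∑ w : Bool, q true true w) = (∑ w : Bool, p true true w) →
      (∑ y : Bool, q true y true) = (∑ y : Bool, p true y true) →
      (∑ x : Bool, q x true true) = (∑ x : Bool, p x true true) →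
      q ≠ p →
      entropy3 q < entropy3 p := by
  intro q hq hqs h1 h2 h3 h12 h13 h23 hne
  simp only [Fintype.sum_bool] at hsum hqs h1 h2 h3 h12 h13 h23
  have d_ttf : q true true false - p true true false = -(q true true true - p true true true) := by linarith
  have d_tft : q true false true - p true false true = -(q true true true - p true true true) := by linarith
  have d_ftt : q false true true - p false true true = -(q true true true - p true true true) := by linarith
  have d_tff : q true false false - p true false false = q true true true - p true true true := by linarith
  have d_ftf : q false true false - p false true false = q true true true - p true true true := by linarith
  have d_fft : q false false true - p false false true = q true true true - p true true true := by linarith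
  have d_fff : q false false false - p false false false = -(q true true true - p true true true) := by linarith
  have htne : q true true true - p true true true ≠ 0 := by
    intro h0
    apply hne
    funext x y w
    cases x <;> cases y <;> cases w <;> linarith
  have hne0 : ∀ x y w, p x y w ≠ 0 := fun x y w => (hpos x y w).ne'
  have lbal : Real.log (p true true false) + Real.log (p true false true)
      + Real.log (p false true true) + Real.log (p false false false)
      = Real.log (p true false false) + Real.log (p false true false)
      + Real.log (p false false true) + Real.log (p true true true) := by
    have hl := congrArg Real.log hbal
    rw [Real.log_mul (mul_ne_zero (mul_ne_zero (hne0 _ _ _) (hne0 _ _ _)) (hne0 _ _ _)) (hne0 _ _ _),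
        Real.log_mul (mul_ne_zero (hne0 _ _ _) (hne0 _ _ _)) (hne0 _ _ _),
        Real.log_mul (hne0 _ _ _) (hne0 _ _ _),
        Real.log_mul (mul_ne_zero (mul_ne_zero (hne0 _ _ _) (hne0 _ _ _)) (hne0 _ _ _)) (hne0 _ _ _),
        Real.log_mul (mul_ne_zero (hne0 _ _ _) (hne0 _ _ _)) (hne0 _ _ _),
        Real.log_mul (hne0 _ _ _) (hne0 _ _ _)] at hl
    linarith
  have hz : Real.log (p true true true) + Real.log (p true false false)
      + Real.log (p false true false) + Real.log (p false false true)
      - (Real.log (p true true false) + Real.log (p true false true)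
        + Real.log (p false true true) + Real.log (p false false false)) = 0 := by
    linarith
  have hcross : (q true true true - p true true true) * Real.log (p true true true)
      + (q true true false - p true true false) * Real.log (p true true false)
      + (q true false true - p true false true) * Real.log (p true false true)
      + (q true false false - p true false false) * Real.log (p true false false)
      + (q false true true - p false true true) * Real.log (p false true true)
      + (q false true false - p false true false) * Real.log (p false true false)
      + (q false false true - p false false true) * Real.log (p false false true)
      + (q false false false - p false false false) * Real.log (p false false false) = 0 := by
    linear_combination (q true true true - p true true true) * hz
      + Real.log (p true true false) * d_ttf
      + Real.log (p true false true) * d_tft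
      + Real.log (p false true true) * d_ftt
      + Real.log (p true false false) * d_tff
      + Real.log (p false true false) * d_ftf
      + Real.log (p false false true) * d_fft
      + Real.log (p false false false) * d_fff
  have g_ttt := gibbs_lt (p true true true) (q true true true) (hpos _ _ _) (hq _ _ _)
    (fun h => htne (by rw [h]; ring))
  have g_ttf := gibbs_le (p true true false) (q true true false) (hpos _ _ _) (hq _ _ _)
  have g_tft := gibbs_le (p true false true) (q true false true) (hpos _ _ _) (hq _ _ _)
  have g_tff := gibbs_le (p true false false) (q true false false) (hpos _ _ _) (hq _ _ _)
  have g_ftt := gibbs_le (p false true true) (q false true true) (hpos _ _ _) (hq _ _ _)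
  have g_ftf := gibbs_le (p false true false) (q false true false) (hpos _ _ _) (hq _ _ _)
  have g_fft := gibbs_le (p false false true) (q false false true) (hpos _ _ _) (hq _ _ _)
  have g_fff := gibbs_le (p false false false) (q false false false) (hpos _ _ _) (hq _ _ _)
  unfold entropy3
  simp only [Fintype.sum_bool]
  linarith [g_ttt, g_ttf, g_tft, g_tff, g_ftt, g_ftf, g_fft, g_fff, hcross, hsum, hqs]
end
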